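/- (Far-OOD Detection.) Let τ > 0 be given a priori and let 𝒟 be a domain space over ℝⁿ in which every domain D = (D_in, D_out) satisfies dist(supp(D_in), supp(D_out)) > τ. Then for any α ∈ (0,1), OOD detection is non-uniformly learnable for 𝒟 in 𝒫(ℝⁿ); in particular, the procedure that maps a sample set S drawn from D_in to the hypothesis h = ⋃_{s∈S} cl(B(s,τ)) (the union of closed τ-balls around the samples) always has OOD risk 0, and its ID risk converges to 0 in probability as the sample size tends to infinity. -/

import Mathlib

open MeasureTheory ENNReal Set Filter

noncomputable section

/-- A domain over an instance space `X` is a pair of (Borel) measures on `X`: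
the ID distribution and the OOD distribution. -/
structure Domain (X : Type*) [MeasurableSpace X] where
  inD : Measure X
  outD : Measure X

namespace Domain

variable {X : Type*} [MeasurableSpace X]

/-- Both components of the domain are probability measures. -/
def IsProb (D : Domain X) : Prop :=
  IsProbabilityMeasure D.inD ∧ IsProbabilityMeasure D.outD

/-- The risk `R^α_D(h) = (1−α)·D_in(X∖h) + α·D_out(h)` of a hypothesis `h ⊆ X`. -/
def risk (D : Domain X) (α : ℝ) (h : Set X) : ℝ≥0∞ :=
  ENNReal.ofReal (1 - α) * D.inD hᶜ + ENNReal.ofReal α * D.outD h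

/-- The ID risk `R^in_D(h) = D_in(X∖h)`. -/
def inRisk (D : Domain X) (h : Set X) : ℝ≥0∞ := D.inD hᶜ

/-- The OOD risk `R^out_D(h) = D_out(h)`. -/
def outRisk (D : Domain X) (h : Set X) : ℝ≥0∞ := D.outD h

end Domain

/-- The distribution of `N` i.i.d. samples from `μ`. -/
def iidSamples {X : Type*} [MeasurableSpace X] (μ : Measure X) (N : ℕ) :
    Measure (Fin N → X) :=
  Measure.pi fun _ => μ

/-- A (deterministic) learning algorithm: given accuracy `ε`, confidence `δ`, a sample size
and a tuple of samples, it outputs a hypothesis. -/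
abbrev Learner (X : Type*) : Type _ := ℝ → ℝ → (n : ℕ) → (Fin n → X) → Set X

/-- Uniform learnability of OOD detection for the domain space `𝒟` in the hypothesis space `H`,
with a priori known OOD probability `α`: there are a sample-complexity function `N(ε,δ)` and a
learner which, for every `ε, δ ∈ (0,1/2)` and every domain `D ∈ 𝒟`, given `N(ε,δ)` i.i.d.
samples from `D_in`, outputs with probability at least `1−δ` a hypothesis in `H` whose risk is
within `ε` of the best risk achievable in `H`. -/
def UniformlyLearnable {X : Type*} [MeasurableSpace X]
    (𝒟 : Set (Domain X)) (H : Set (Set X)) (α : ℝ) : Prop :=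
  ∃ (N : ℝ → ℝ → ℕ) (A : Learner X),
    (∀ ε δ n S, A ε δ n S ∈ H) ∧
    ∀ ε δ : ℝ, 0 < ε → ε < 1/2 → 0 < δ → δ < 1/2 →
      ∀ D ∈ 𝒟,
        ENNReal.ofReal (1 - δ) ≤
          iidSamples D.inD (N ε δ)
            {S | D.risk α (A ε δ (N ε δ) S) ≤ (⨅ h' ∈ H, D.risk α h') + ENNReal.ofReal ε}

/-- Non-uniform learnability of OOD detection: as in `UniformlyLearnable`, except that the
number of samples the learner needs may depend on the domain `D ∈ 𝒟`. -/
def NonUniformlyLearnable {X : Type*} [MeasurableSpace X]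
    (𝒟 : Set (Domain X)) (H : Set (Set X)) (α : ℝ) : Prop :=
  ∃ A : Learner X,
    (∀ ε δ n S, A ε δ n S ∈ H) ∧
    ∀ ε δ : ℝ, 0 < ε → ε < 1/2 → 0 < δ → δ < 1/2 →
      ∀ D ∈ 𝒟, ∃ N : ℕ,
        ENNReal.ofReal (1 - δ) ≤
          iidSamples D.inD N
            {S | D.risk α (A ε δ N S) ≤ (⨅ h' ∈ H, D.risk α h') + ENNReal.ofReal ε}

/-- The support of a measure on a topological space: the set of points all of whose open
neighbourhoods have positive measure. -/
def msupport {X : Type*} [MeasurableSpace X] [TopologicalSpace X] (μ : Measure X) : Set X :=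
  {x | ∀ U : Set X, IsOpen U → x ∈ U → 0 < μ U}

/-- The Disjoint Supports Assumption. -/
def Domain.DSA {X : Type*} [MeasurableSpace X] [TopologicalSpace X] (D : Domain X) : Prop :=
  msupport D.inD ∩ msupport D.outD = ∅

/-- The instance space `ℝⁿ`. -/
abbrev Euc (n : ℕ) : Type := EuclideanSpace ℝ (Fin n)

/-- The (extended) distance between two sets. -/
def setEDist {X : Type*} [PseudoEMetricSpace X] (A B : Set X) : ℝ≥0∞ :=
  ⨅ x ∈ A, EMetric.infEdist x B

/-- The `τ`-Far Supports Assumption: the supports of the ID and OOD distributions are at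
distance more than `τ`. -/
def Domain.FSA {n : ℕ} (D : Domain (Euc n)) (τ : ℝ) : Prop :=
  ENNReal.ofReal τ < setEDist (msupport D.inD) (msupport D.outD)

/-- The Bounded ID Support Assumption: the support of the ID distribution has diameter
less than `R`. -/
def Domain.BoundedID {n : ℕ} (D : Domain (Euc n)) (R : ℝ) : Prop :=
  EMetric.diam (msupport D.inD) < ENNReal.ofReal R


/-! ### Auxiliary lemmas -/

section AuxSupport

variable {X : Type*} [MeasurableSpace X] [TopologicalSpace X]

lemma compl_msupport_eq (μ : Measure X) :
    (msupport μ)ᶜ = ⋃₀ {U | IsOpen U ∧ μ U = 0} := by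
  ext x
  simp only [mem_compl_iff, msupport, mem_setOf_eq, not_forall, mem_sUnion, not_lt,
    nonpos_iff_eq_zero]
  constructor
  · rintro ⟨U, hU, hx, hμ⟩
    exact ⟨U, ⟨hU, hμ⟩, hx⟩
  · rintro ⟨U, ⟨hU, hμ⟩, hx⟩
    exact ⟨U, hU, hx, hμ⟩

lemma isClosed_msupport (μ : Measure X) : IsClosed (msupport μ) := by
  rw [← isOpen_compl_iff, compl_msupport_eq]
  exact isOpen_sUnion fun U hU => hU.1

lemma measure_compl_msupport [SecondCountableTopology X] (μ : Measure X) :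
    μ (msupport μ)ᶜ = 0 := by
  obtain ⟨T, hTc, hTS, hT⟩ := TopologicalSpace.isOpen_sUnion_countable
    {U : Set X | IsOpen U ∧ μ U = 0} (fun U hU => hU.1)
  rw [compl_msupport_eq, ← hT]
  exact (measure_sUnion_null_iff hTc).2 fun U hU => (hTS hU).2

end AuxSupport

/-- Closed `τ`-balls around points of the ID support avoid the OOD support. -/
lemma closedBall_subset_compl_msupport {n : ℕ} {D : Domain (Euc n)} {τ : ℝ}
    (hfar : D.FSA τ) {s : Euc n} (hs : s ∈ msupport D.inD) :
    Metric.closedBall s τ ⊆ (msupport D.outD)ᶜ := by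
  intro x hx hmem
  have h1 : setEDist (msupport D.inD) (msupport D.outD) ≤
      EMetric.infEdist s (msupport D.outD) := by
    exact iInf₂_le s hs
  have h2 : EMetric.infEdist s (msupport D.outD) ≤ edist s x :=
    EMetric.infEdist_le_edist_of_mem hmem
  have hτ0 : (0:ℝ) ≤ τ := le_trans dist_nonneg (Metric.mem_closedBall.1 hx)
  have h3 : edist s x ≤ ENNReal.ofReal τ := by
    rw [edist_comm]
    exact (edist_le_ofReal hτ0).2 (Metric.mem_closedBall.1 hx)
  exact absurd hfar (not_lt.2 ((h1.trans h2).trans h3))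

/-- The union of closed `τ`-balls around ID-support points has `D_out`-measure zero. -/
lemma outD_balls_zero {n : ℕ} {D : Domain (Euc n)} {τ : ℝ}
    (hfar : D.FSA τ) {N : ℕ} {S : Fin N → Euc n} (hS : ∀ i, S i ∈ msupport D.inD) :
    D.outD (⋃ i, Metric.closedBall (S i) τ) = 0 := by
  refine measure_mono_null ?_ (measure_compl_msupport D.outD)
  exact iUnion_subset fun i => closedBall_subset_compl_msupport hfar (hS i)

/-- The key estimate: the probability that the union of `τ`-balls around `N` i.i.d. samples
misses `ε` of ID mass is bounded by a quantity tending to `0`. -/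
lemma key_bound {n : ℕ} {τ : ℝ} (hτ : 0 < τ) (μ : Measure (Euc n))
    [IsProbabilityMeasure μ] {ε : ℝ} (hε : 0 < ε) :
    ∃ F : ℕ → ℝ≥0∞, Tendsto F atTop (nhds 0) ∧
      ∀ N : ℕ, iidSamples μ N
        {S : Fin N → Euc n | ENNReal.ofReal ε < μ (⋃ i, Metric.closedBall (S i) τ)ᶜ} ≤ F N := by
  have hsuppc : μ (msupport μ)ᶜ = 0 := measure_compl_msupport μ
  have hsupp1 : μ (msupport μ) = 1 :=
    (prob_compl_eq_zero_iff (isClosed_msupport μ).measurableSet).1 hsuppc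
  -- a countable dense subset of the support
  obtain ⟨c, hc, hcd⟩ := TopologicalSpace.IsSeparable.of_separableSpace (msupport μ)
  set c' : Set (Euc n) := {y ∈ c | μ (Metric.ball y (τ/2)) ≠ 0} with hc'def
  have hcover : msupport μ ⊆ ⋃ y ∈ c', Metric.ball y (τ/2) := by
    intro x hx
    obtain ⟨y, hy, hxy⟩ := Metric.mem_closure_iff.1 (hcd hx) (τ/2) (by linarith)
    have hxb : x ∈ Metric.ball y (τ/2) := Metric.mem_ball.2 hxy
    have hpos : 0 < μ (Metric.ball y (τ/2)) := hx _ Metric.isOpen_ball hxb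
    exact mem_biUnion ⟨hy, hpos.ne'⟩ hxb
  have hc'ne : c'.Nonempty := by
    rcases Set.eq_empty_or_nonempty c' with h | h
    · exfalso
      rw [h] at hcover
      simp only [mem_empty_iff_false, iUnion_of_empty, iUnion_empty] at hcover
      have : μ (msupport μ) = 0 := measure_mono_null hcover (measure_empty)
      rw [hsupp1] at this; exact one_ne_zero this
    · exact h
  obtain ⟨e, he⟩ := (hc.mono (sep_subset _ _)).exists_eq_range hc'ne
  set B : ℕ → Set (Euc n) := fun k => Metric.ball (e k) (τ/2) with hBdef
  have hBpos : ∀ k, μ (B k) ≠ 0 := by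
    intro k
    have hek : e k ∈ c' := by rw [hc'def.trans he]; exact mem_range_self k
    exact hek.2
  have hcover' : msupport μ ⊆ ⋃ k, B k := by
    refine hcover.trans ?_
    rw [hc'def.trans he]
    intro x hx
    simp only [mem_iUnion, mem_range, exists_prop] at hx ⊢
    obtain ⟨y, ⟨k, rfl⟩, hy⟩ := hx
    exact ⟨k, hy⟩
  -- choose K large enough
  set U : ℕ → Set (Euc n) := fun K => ⋃ k ∈ Finset.range K, B k with hUdef
  have hUmeas : ∀ K, MeasurableSet (U K) := fun K =>
    (Finset.range K).measurableSet_biUnion (fun k _ => measurableSet_ball)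
  have hUanti : Antitone fun K => (U K)ᶜ := by
    intro K L hKL
    apply compl_subset_compl.2
    exact biUnion_subset_biUnion_left (Finset.range_subset_range.2 hKL)
  have hInter : μ (⋂ K, (U K)ᶜ) = 0 := by
    refine measure_mono_null ?_ hsuppc
    rw [← compl_iUnion]
    apply compl_subset_compl.2
    refine hcover'.trans ?_
    intro x hx
    simp only [mem_iUnion] at hx ⊢
    obtain ⟨k, hk⟩ := hx
    exact ⟨k + 1, mem_biUnion (Finset.self_mem_range_succ k) hk⟩
  have htendU : Tendsto (fun K => μ (U K)ᶜ) atTop (nhds 0) := by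
    have := tendsto_measure_iInter_atTop (μ := μ)
      (fun K => (hUmeas K).compl.nullMeasurableSet) hUanti ⟨0, measure_ne_top μ _⟩
    rwa [hInter] at this
  have hεpos : (0:ℝ≥0∞) < ENNReal.ofReal ε := ENNReal.ofReal_pos.2 hε
  obtain ⟨K, hK⟩ := (htendU.eventually (gt_mem_nhds hεpos)).exists
  -- the bounding sequence
  refine ⟨fun N => ∑ k ∈ Finset.range K, (μ (B k)ᶜ)^N, ?_, ?_⟩
  · have : Tendsto (fun N => ∑ k ∈ Finset.range K, (μ (B k)ᶜ)^N) atTop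
        (nhds (∑ k ∈ Finset.range K, 0)) := by
      refine tendsto_finset_sum _ fun k _ => ?_
      refine ENNReal.tendsto_pow_atTop_nhds_zero_of_lt_one ?_
      rw [measure_compl measurableSet_ball (measure_ne_top μ _), measure_univ]
      exact ENNReal.sub_lt_self one_ne_top one_ne_zero (hBpos k)
    simpa using this
  · intro N
    have hsub : {S : Fin N → Euc n | ENNReal.ofReal ε < μ (⋃ i, Metric.closedBall (S i) τ)ᶜ}
        ⊆ ⋃ k ∈ Finset.range K, {S : Fin N → Euc n | ∀ i, S i ∉ B k} := by
      intro S hS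
      by_contra hcon
      have hcon' : ∀ k ∈ Finset.range K, ∃ i, S i ∈ B k := by
        intro k hk
        by_contra h
        push_neg at h
        exact hcon (mem_biUnion hk h)
      have hUsub : U K ⊆ ⋃ i, Metric.closedBall (S i) τ := by
        intro x hx
        simp only [hUdef, mem_iUnion, exists_prop] at hx
        obtain ⟨k, hk, hxk⟩ := hx
        obtain ⟨i, hi⟩ := hcon' k hk
        refine mem_iUnion.2 ⟨i, Metric.mem_closedBall.2 ?_⟩
        have h1 : dist x (e k) < τ/2 := Metric.mem_ball.1 hxk
        have h2 : dist (S i) (e k) < τ/2 := Metric.mem_ball.1 hi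
        calc dist x (S i) ≤ dist x (e k) + dist (e k) (S i) := dist_triangle _ _ _
          _ = dist x (e k) + dist (S i) (e k) := by rw [dist_comm (e k)]
          _ ≤ τ := by linarith
      have : μ (⋃ i, Metric.closedBall (S i) τ)ᶜ ≤ μ (U K)ᶜ :=
        measure_mono (compl_subset_compl.2 hUsub)
      exact absurd (hS.trans_le this) (not_lt.2 hK.le)
    refine (measure_mono hsub).trans ?_
    refine (measure_biUnion_finset_le _ _).trans ?_
    refine Finset.sum_le_sum fun k _ => ?_
    have heq : {S : Fin N → Euc n | ∀ i, S i ∉ B k} = Set.pi univ (fun _ => (B k)ᶜ) := by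
      ext S; simp [Set.mem_pi]
    rw [heq, iidSamples, Measure.pi_pi]
    simp [Finset.prod_const]

/-- **Far-OOD detection.** If every domain of `𝒟` has ID and OOD supports at distance more than
`τ`, then OOD detection is non-uniformly learnable for `𝒟` in `𝒫(ℝⁿ)`; moreover the union of
closed `τ`-balls around the samples always has OOD risk `0`, and its ID risk converges to `0`
in probability as the sample size tends to infinity. -/
theorem far_OOD_detection
    (n : ℕ) (τ : ℝ) (hτ : 0 < τ)
    (𝒟 : Set (Domain (Euc n))) (hprob : ∀ D ∈ 𝒟, D.IsProb)
    (hfar : ∀ D ∈ 𝒟, D.FSA τ)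
    (α : ℝ) (hα : α ∈ Set.Ioo (0 : ℝ) 1) :
    NonUniformlyLearnable 𝒟 Set.univ α ∧
    (∀ D ∈ 𝒟, ∀ (N : ℕ) (S : Fin N → Euc n), (∀ i, S i ∈ msupport D.inD) →
      D.outRisk (⋃ i, Metric.closedBall (S i) τ) = 0) ∧
    (∀ D ∈ 𝒟, ∀ ε : ℝ, 0 < ε →
      Filter.Tendsto
        (fun N => iidSamples D.inD N
          {S | ENNReal.ofReal ε < D.inRisk (⋃ i, Metric.closedBall (S i) τ)})
        Filter.atTop (nhds 0)) := by
  -- Part 2: OOD risk is zero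
  have part2 : ∀ D ∈ 𝒟, ∀ (N : ℕ) (S : Fin N → Euc n), (∀ i, S i ∈ msupport D.inD) →
      D.outRisk (⋃ i, Metric.closedBall (S i) τ) = 0 := by
    intro D hD N S hS
    exact outD_balls_zero (hfar D hD) hS
  -- Part 3: ID risk tends to zero in probability
  have part3 : ∀ D ∈ 𝒟, ∀ ε : ℝ, 0 < ε →
      Filter.Tendsto
        (fun N => iidSamples D.inD N
          {S | ENNReal.ofReal ε < D.inRisk (⋃ i, Metric.closedBall (S i) τ)})
        Filter.atTop (nhds 0) := by
    intro D hD ε hε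
    haveI := (hprob D hD).1
    obtain ⟨F, hF0, hFb⟩ := key_bound hτ D.inD hε
    simp only [Domain.inRisk]
    exact tendsto_of_tendsto_of_tendsto_of_le_of_le tendsto_const_nhds hF0
      (fun N => zero_le) hFb
  refine ⟨?_, part2, part3⟩
  -- Part 1: non-uniform learnability
  refine ⟨fun _ _ N S => ⋃ i, Metric.closedBall (S i) τ, fun _ _ _ _ => mem_univ _, ?_⟩
  intro ε δ hε hε2 hδ hδ2 D hD
  haveI hPin := (hprob D hD).1
  obtain ⟨F, hF0, hFb⟩ := key_bound hτ D.inD hε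
  obtain ⟨N, hN⟩ := (hF0.eventually (gt_mem_nhds (ENNReal.ofReal_pos.2 hδ))).exists
  refine ⟨N, ?_⟩
  haveI : IsProbabilityMeasure (iidSamples D.inD N) := by
    unfold iidSamples; infer_instance
  set μ := D.inD
  set A : Set (Fin N → Euc n) := Set.pi univ (fun _ => msupport μ) with hAdef
  set Bad : Set (Fin N → Euc n) :=
    {S | ENNReal.ofReal ε < μ (⋃ i, Metric.closedBall (S i) τ)ᶜ} with hBaddef
  have hAmeas : MeasurableSet A :=
    MeasurableSet.univ_pi (fun _ => (isClosed_msupport μ).measurableSet)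
  have hA1 : iidSamples μ N A = 1 := by
    rw [hAdef, iidSamples, Measure.pi_pi]
    simp [(prob_compl_eq_zero_iff (isClosed_msupport μ).measurableSet).1
      (measure_compl_msupport μ)]
  have hAc0 : iidSamples μ N Aᶜ = 0 :=
    (prob_compl_eq_zero_iff hAmeas).2 hA1
  have hBad : iidSamples μ N Bad ≤ ENNReal.ofReal δ := (hFb N).trans hN.le
  -- the good event
  have hgood : A ∩ Badᶜ ⊆
      {S | D.risk α ((fun _ _ N S => ⋃ i, Metric.closedBall (S i) τ) ε δ N S) ≤
        (⨅ h' ∈ (Set.univ : Set (Set (Euc n))), D.risk α h') + ENNReal.ofReal ε} := by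
    rintro S ⟨hSA, hSB⟩
    have hSsupp : ∀ i, S i ∈ msupport μ := fun i => hSA i (mem_univ i)
    have hout : D.outD (⋃ i, Metric.closedBall (S i) τ) = 0 :=
      outD_balls_zero (hfar D hD) hSsupp
    have hin : μ (⋃ i, Metric.closedBall (S i) τ)ᶜ ≤ ENNReal.ofReal ε := not_lt.1 hSB
    simp only [mem_setOf_eq, Domain.risk, hout, mul_zero, add_zero]
    calc ENNReal.ofReal (1 - α) * μ (⋃ i, Metric.closedBall (S i) τ)ᶜ
        ≤ 1 * μ (⋃ i, Metric.closedBall (S i) τ)ᶜ := by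
          gcongr
          exact ENNReal.ofReal_le_one.2 (by linarith [hα.1])
      _ = μ (⋃ i, Metric.closedBall (S i) τ)ᶜ := one_mul _
      _ ≤ ENNReal.ofReal ε := hin
      _ ≤ (⨅ h' ∈ (Set.univ : Set (Set (Euc n))), D.risk α h') + ENNReal.ofReal ε :=
          le_add_self
  calc ENNReal.ofReal (1 - δ) = ENNReal.ofReal 1 - ENNReal.ofReal δ :=
        ENNReal.ofReal_sub 1 hδ.le
    _ ≤ 1 - ENNReal.ofReal δ := by simp
    _ ≤ iidSamples μ N (A ∩ Badᶜ) := by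
        rw [tsub_le_iff_right]
        calc (1:ℝ≥0∞) = iidSamples μ N univ := measure_univ.symm
          _ ≤ iidSamples μ N ((A ∩ Badᶜ) ∪ (Aᶜ ∪ Bad)) := by
              refine measure_mono fun S _ => ?_
              by_cases h1 : S ∈ A
              · by_cases h2 : S ∈ Bad
                · exact Or.inr (Or.inr h2)
                · exact Or.inl ⟨h1, h2⟩
              · exact Or.inr (Or.inl h1)
          _ ≤ iidSamples μ N (A ∩ Badᶜ) + iidSamples μ N (Aᶜ ∪ Bad) := measure_union_le _ _
          _ ≤ iidSamples μ N (A ∩ Badᶜ) + (iidSamples μ N Aᶜ + iidSamples μ N Bad) := by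
              gcongr; exact measure_union_le _ _
          _ ≤ iidSamples μ N (A ∩ Badᶜ) + ENNReal.ofReal δ := by
              rw [hAc0, zero_add]; gcongr
    _ ≤ _ := measure_mono hgood
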